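/- Assume that for every n ≥ 3, the weight function w_n on G_n (the graph obtained by attaching a pendant root r to a vertex of Q_{n-1}), defined by w_n(r) = 0 and w_n(v) = 1/d(v,r) for v ≠ r, is valid. Then for every n ≥ 2, π(Q_n) = 2^n. -/

import Mathlib

open SimpleGraph Finset

def PebMove {V : Type*} [DecidableEq V] (G : SimpleGraph V) (p q : V → ℕ) : Prop :=
  ∃ u v, G.Adj u v ∧ 2 ≤ p u ∧
    q = fun x => if x = u then p u - 2 else if x = v then p v + 1 else p x

def Solvable {V : Type*} [DecidableEq V] (G : SimpleGraph V) (r : V) (p : V → ℕ) : Prop :=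
  ∃ q, Relation.ReflTransGen (PebMove G) p q ∧ 1 ≤ q r

noncomputable def confWeight {V : Type*} [Fintype V] (w : V → ℝ) (p : V → ℕ) : ℝ :=
  ∑ v, (p v : ℝ) * w v

def ValidWeight {V : Type*} [Fintype V] [DecidableEq V] (G : SimpleGraph V) (r : V)
    (w : V → ℝ) : Prop :=
  w r = 0 ∧ (∀ v, v ≠ r → 0 < w v) ∧
    ∀ p : V → ℕ, ¬ Solvable G r p → confWeight w p ≤ confWeight w (fun _ => 1)

noncomputable def rootedPebblingNumber {V : Type*} [Fintype V] [DecidableEq V]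
    (G : SimpleGraph V) (r : V) : ℕ :=
  sInf {N | ∀ p : V → ℕ, N ≤ ∑ v, p v → Solvable G r p}

noncomputable def pebblingNumber {V : Type*} [Fintype V] [DecidableEq V]
    (G : SimpleGraph V) : ℕ :=
  sInf {N | ∀ (r : V) (p : V → ℕ), N ≤ ∑ v, p v → Solvable G r p}

def cubeGraph (n : ℕ) : SimpleGraph (Fin n → Bool) :=
  SimpleGraph.fromRel (fun x y => hammingDist x y = 1)

def addPendant {V : Type*} (G : SimpleGraph V) (a : V) : SimpleGraph (Option V) :=
  SimpleGraph.fromRel (fun x y =>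
    match x, y with
    | some u, some v => G.Adj u v
    | none, some u => u = a
    | _, _ => False)

def lollipop (n m : ℕ) : SimpleGraph (Fin (n + 1) ⊕ Fin (m + 1)) :=
  SimpleGraph.fromRel (fun x y =>
    match x, y with
    | Sum.inl i, Sum.inl j => (i : ℕ) + 1 = (j : ℕ)
    | Sum.inl i, Sum.inr j => i = 0 ∧ j ≠ 0
    | Sum.inr i, Sum.inr j => i = 0 ∧ j ≠ 0
    | _, _ => False)

section Gen
variable {V : Type*} [DecidableEq V] {G : SimpleGraph V} {p q p' : V → ℕ} {r : V}

lemma pebMove_mono (hm : PebMove G p q) (hle : ∀ v, p v ≤ p' v) :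
    ∃ q', PebMove G p' q' ∧ ∀ v, q v ≤ q' v := by
  obtain ⟨u, v, hadj, hu, rfl⟩ := hm
  refine ⟨_, ⟨u, v, hadj, le_trans hu (hle u), rfl⟩, fun x => ?_⟩
  have h1 := hle u; have h2 := hle v; have h3 := hle x
  dsimp only
  split_ifs <;> omega

lemma rtg_mono (hm : Relation.ReflTransGen (PebMove G) p q) (hle : ∀ v, p v ≤ p' v) :
    ∃ q', Relation.ReflTransGen (PebMove G) p' q' ∧ ∀ v, q v ≤ q' v := by
  induction hm with
  | refl => exact ⟨p', Relation.ReflTransGen.refl, hle⟩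
  | tail _ hstep ih =>
    obtain ⟨q', hq', hle'⟩ := ih
    obtain ⟨q'', hq'', hle''⟩ := pebMove_mono hstep hle'
    exact ⟨q'', hq'.tail hq'', hle''⟩

lemma solvable_mono (hs : Solvable G r p) (hle : ∀ v, p v ≤ p' v) : Solvable G r p' := by
  obtain ⟨q, hq, hr⟩ := hs
  obtain ⟨q', hq', hle'⟩ := rtg_mono hq hle
  exact ⟨q', hq', le_trans hr (hle' r)⟩

variable [Fintype V]

lemma pebMove_weight (w : V → ℝ) (hadj : ∀ u v, G.Adj u v → w v ≤ 2 * w u)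
    (hm : PebMove G p q) : confWeight w q ≤ confWeight w p := by
  obtain ⟨u, v, hadjuv, hu, rfl⟩ := hm
  have hne : u ≠ v := G.ne_of_adj hadjuv
  have key : ∀ x, ((if x = u then p u - 2 else if x = v then p v + 1 else p x : ℕ) : ℝ) * w x
      = (p x : ℝ) * w x + ((if x = u then -2 * w u else 0) + (if x = v then w v else 0)) := by
    intro x
    by_cases h1 : x = u
    · subst h1
      rw [if_pos rfl, if_pos rfl, if_neg hne, Nat.cast_sub hu]
      push_cast; ring
    · by_cases h2 : x = v
      · subst h2
        rw [if_neg h1, if_pos rfl, if_neg h1, if_pos rfl]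
        push_cast; ring
      · rw [if_neg h1, if_neg h2, if_neg h1, if_neg h2]; ring
  have : confWeight w (fun x => if x = u then p u - 2 else if x = v then p v + 1 else p x)
      = confWeight w p + ((-2 * w u) + w v) := by
    unfold confWeight
    rw [Finset.sum_congr rfl (fun x _ => key x), Finset.sum_add_distrib,
      Finset.sum_add_distrib, Finset.sum_ite_eq' univ u (fun _ => -2 * w u),
      Finset.sum_ite_eq' univ v (fun _ => w v)]
    simp
  rw [this]
  have := hadj u v hadjuv
  linarith

lemma rtg_weight (w : V → ℝ) (hadj : ∀ u v, G.Adj u v → w v ≤ 2 * w u)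
    (hm : Relation.ReflTransGen (PebMove G) p q) : confWeight w q ≤ confWeight w p := by
  induction hm with
  | refl => exact le_refl _
  | tail _ hstep ih => exact le_trans (pebMove_weight w hadj hstep) ih

end Gen

lemma cube_adj {n : ℕ} {x y : Fin n → Bool} :
    (cubeGraph n).Adj x y ↔ hammingDist x y = 1 := by
  rw [cubeGraph, fromRel_adj]
  constructor
  · rintro ⟨hne, h | h⟩
    · exact h
    · rw [hammingDist_comm]; exact h
  · intro h
    refine ⟨fun he => by simp [he, hammingDist_self] at h, Or.inl h⟩

lemma hammingDist_update {n : ℕ} (x : Fin n → Bool) (i : Fin n) (b : Bool) (hb : x i ≠ b) :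
    hammingDist x (Function.update x i b) = 1 := by
  unfold hammingDist
  rw [Finset.card_eq_one]
  refine ⟨i, ?_⟩
  ext j
  by_cases hj : j = i
  · subst hj; simp [Function.update_apply, hb]
  · simp [Function.update_apply, hj]

lemma hammingDist_update_erase {n : ℕ} (x y : Fin n → Bool) (i : Fin n) (hb : x i ≠ y i) :
    hammingDist (Function.update x i (y i)) y = hammingDist x y - 1 := by
  unfold hammingDist
  have : (univ.filter fun j => Function.update x i (y i) j ≠ y j)
      = (univ.filter fun j => x j ≠ y j).erase i := by
    ext j
    by_cases hj : j = i
    · subst hj; simp [Function.update_apply]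
    · simp [Function.update_apply, hj]
  rw [this, Finset.card_erase_of_mem (by simp [hb])]

lemma cube_walk {n : ℕ} : ∀ (d : ℕ) (x y : Fin n → Bool), hammingDist x y = d →
    ∃ p : (cubeGraph n).Walk x y, p.length = d := by
  intro d
  induction d with
  | zero =>
    intro x y hd
    obtain rfl : x = y := hammingDist_eq_zero.mp hd
    exact ⟨Walk.nil, rfl⟩
  | succ d ih =>
    intro x y hd
    have hne : x ≠ y := by
      intro he; rw [he, hammingDist_self] at hd; omega
    obtain ⟨i, hi⟩ : ∃ i, x i ≠ y i := by
      by_contra hx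
      push_neg at hx
      exact hne (funext hx)
    have hadj : (cubeGraph n).Adj x (Function.update x i (y i)) :=
      cube_adj.mpr (hammingDist_update x i (y i) hi)
    have hd' : hammingDist (Function.update x i (y i)) y = d := by
      rw [hammingDist_update_erase x y i hi, hd]; omega
    obtain ⟨p, hp⟩ := ih _ y hd'
    exact ⟨Walk.cons hadj p, by simp [hp]⟩

lemma hammingDist_eq_sum {ι : Type*} [Fintype ι] [DecidableEq ι] (x y : ι → Bool) :
    hammingDist x y = ∑ i, if x i ≠ y i then 1 else 0 := by
  unfold hammingDist
  exact Finset.card_filter _ _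

lemma hammingDist_insertNth {m : ℕ} (i : Fin (m + 1)) (b c : Bool) (u v : Fin m → Bool) :
    hammingDist (i.insertNth b u : Fin (m + 1) → Bool) (i.insertNth c v) 
      = (if b = c then 0 else 1) + hammingDist u v := by
  rw [hammingDist_eq_sum, hammingDist_eq_sum u v, Fin.sum_univ_succAbove _ i]
  simp only [Fin.insertNth_apply_same, Fin.insertNth_apply_succAbove]
  congr 1
  by_cases hbc : b = c <;> simp [hbc]

lemma pendant_adj_none {m : ℕ} (a : Fin m → Bool) :
    (addPendant (cubeGraph m) a).Adj none (some a) := by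
  rw [addPendant, fromRel_adj]
  exact ⟨by simp, Or.inl rfl⟩

lemma pendant_adj_some {m : ℕ} (a : Fin m → Bool) {u v : Fin m → Bool}
    (h : (cubeGraph m).Adj u v) : (addPendant (cubeGraph m) a).Adj (some u) (some v) := by
  rw [addPendant, fromRel_adj]
  exact ⟨by simpa using h.ne, Or.inl h⟩

def pendantPhi {m : ℕ} (a : Fin m → Bool) : Option (Fin m → Bool) → ℕ
  | none => 0
  | some x => hammingDist a x + 1

lemma pendant_phi_adj {m : ℕ} (a : Fin m → Bool) {x y : Option (Fin m → Bool)}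
    (h : (addPendant (cubeGraph m) a).Adj x y) : pendantPhi a y ≤ pendantPhi a x + 1 := by
  rw [addPendant, fromRel_adj] at h
  obtain ⟨hne, hh⟩ := h
  match x, y with
  | none, none => exact absurd rfl hne
  | some u, none => simp [pendantPhi]
  | none, some u =>
    have : u = a := by
      rcases hh with h | h
      · exact h
      · exact h.elim
    subst this
    simp [pendantPhi, hammingDist_self]
  | some u, some v =>
    have h2 : hammingDist u v = 1 := by
      rcases hh with h | h
      · exact cube_adj.mp h
      · rw [hammingDist_comm]; exact cube_adj.mp h
    simp only [pendantPhi]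
    have := hammingDist_triangle a u v
    omega

lemma pendant_phi_walk {m : ℕ} (a : Fin m → Bool) {x y : Option (Fin m → Bool)}
    (p : (addPendant (cubeGraph m) a).Walk x y) :
    pendantPhi a y ≤ pendantPhi a x + p.length := by
  induction p with
  | nil => simp
  | cons hadj p ih =>
    have := pendant_phi_adj a hadj
    simp only [Walk.length_cons]
    omega

def someHom {m : ℕ} (a : Fin m → Bool) : cubeGraph m →g addPendant (cubeGraph m) a where
  toFun := some
  map_rel' := fun h => pendant_adj_some a h

lemma pendant_dist {m : ℕ} (a u : Fin m → Bool) :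
    (addPendant (cubeGraph m) a).dist none (some u) = hammingDist a u + 1 := by
  obtain ⟨p, hp⟩ := cube_walk (hammingDist a u) a u rfl
  let W : (addPendant (cubeGraph m) a).Walk none (some u) :=
    Walk.cons (pendant_adj_none a) (p.map (someHom a))
  have hWlen : W.length = hammingDist a u + 1 := by
    show (p.map (someHom a)).length + 1 = hammingDist a u + 1
    rw [Walk.length_map, hp]
  have hreach : (addPendant (cubeGraph m) a).Reachable none (some u) := ⟨W⟩
  obtain ⟨q, hq⟩ := hreach.exists_walk_length_eq_dist
  have hlow := pendant_phi_walk a q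
  have hup := SimpleGraph.dist_le W
  simp only [pendantPhi] at hlow
  omega

section Solv
variable {V : Type*} [DecidableEq V] {G : SimpleGraph V} {r u v : V} {p : V → ℕ}

lemma solvable_head (p' : V → ℕ) (hm : PebMove G p p') (hs : Solvable G r p') :
    Solvable G r p := by
  obtain ⟨q, hq, hr⟩ := hs
  exact ⟨q, hq.head hm, hr⟩

lemma solv_root (h : 1 ≤ p r) : Solvable G r p := ⟨p, Relation.ReflTransGen.refl, h⟩

lemma solv_adj (hadj : G.Adj u r) (h : 2 ≤ p u) : Solvable G r p := by
  refine solvable_head _ ⟨u, r, hadj, h, rfl⟩ (solv_root ?_)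
  rw [if_neg hadj.ne', if_pos rfl]
  omega

lemma solv_chain2 (hadj1 : G.Adj u v) (hadj2 : G.Adj v r) (h2 : 2 ≤ p u) (h1 : 1 ≤ p v) :
    Solvable G r p := by
  refine solvable_head _ ⟨u, v, hadj1, h2, rfl⟩ (solv_adj hadj2 ?_)
  rw [if_neg hadj1.ne', if_pos rfl]
  omega

lemma solv_chain4 (hadj1 : G.Adj u v) (hadj2 : G.Adj v r) (h4 : 4 ≤ p u) :
    Solvable G r p := by
  refine solvable_head _ ⟨u, v, hadj1, by omega, rfl⟩ (solv_chain2 hadj1 hadj2 ?_ ?_)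
  · rw [if_pos rfl]; omega
  · rw [if_neg hadj1.ne', if_pos rfl]; omega

end Solv

lemma cube_weight_adj {n : ℕ} (r : Fin n → Bool) {u v : Fin n → Bool}
    (hadj : (cubeGraph n).Adj u v) :
    ((1 / 2 : ℝ) ^ hammingDist v r) ≤ 2 * (1 / 2 : ℝ) ^ hammingDist u r := by
  have h1 : hammingDist u v = 1 := cube_adj.mp hadj
  have h2 : hammingDist u r ≤ hammingDist v r + 1 := by
    have := hammingDist_triangle u v r
    omega
  rcases Nat.eq_zero_or_pos (hammingDist u r) with h0 | h0
  · rw [h0, pow_zero]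
    have : (1 / 2 : ℝ) ^ hammingDist v r ≤ 1 :=
      pow_le_one₀ (by norm_num) (by norm_num)
    linarith
  · obtain ⟨k, hk⟩ : ∃ k, hammingDist u r = k + 1 := ⟨hammingDist u r - 1, by omega⟩
    have hle : k ≤ hammingDist v r := by omega
    have hpe : (1 / 2 : ℝ) ^ hammingDist v r ≤ (1 / 2 : ℝ) ^ k :=
      pow_le_pow_of_le_one (by norm_num) (by norm_num) hle
    rw [hk, pow_succ]
    linarith [pow_nonneg (by norm_num : (0:ℝ) ≤ 1/2) k]

lemma cube_unsolvable (n : ℕ) :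
    ¬ Solvable (cubeGraph n) (fun _ => false)
      (fun v => if v = (fun _ => true) then 2 ^ n - 1 else 0) := by
  intro hs
  set r : Fin n → Bool := fun _ => false with hr
  set vstar : Fin n → Bool := fun _ => true with hv
  set w : (Fin n → Bool) → ℝ := fun v => (1 / 2 : ℝ) ^ hammingDist v r with hw
  obtain ⟨q, hq, hqr⟩ := hs
  have hmono := rtg_weight w (fun u v hadj => cube_weight_adj r hadj) hq
  have hwr : w r = 1 := by simp [hw, hammingDist_self]
  have hlow : (1 : ℝ) ≤ confWeight w q := by
    have : (q r : ℝ) * w r ≤ confWeight w q := by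
      apply Finset.single_le_sum (f := fun v => (q v : ℝ) * w v)
      · intro i _
        positivity
      · exact Finset.mem_univ r
    rw [hwr] at this
    have h1 : (1 : ℝ) ≤ (q r : ℝ) := by exact_mod_cast hqr
    linarith
  have hstar : hammingDist vstar r = n := by
    unfold hammingDist
    simp [hv, hr]
  have hup : confWeight w (fun v => if v = vstar then 2 ^ n - 1 else 0)
      = ((2 ^ n - 1 : ℕ) : ℝ) * (1 / 2 : ℝ) ^ n := by
    unfold confWeight
    have : ∀ x : Fin n → Bool, (((if x = vstar then 2 ^ n - 1 else 0 : ℕ) : ℝ)) * w x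
        = if x = vstar then ((2 ^ n - 1 : ℕ) : ℝ) * (1 / 2 : ℝ) ^ n else 0 := by
      intro x
      by_cases hx : x = vstar
      · subst hx; simp [hw, hstar]
      · simp [hx]
    rw [Finset.sum_congr rfl (fun x _ => this x), Finset.sum_ite_eq' univ vstar]
    simp
  rw [hup] at hmono
  have hcast : ((2 ^ n - 1 : ℕ) : ℝ) = 2 ^ n - 1 := by
    have : (1 : ℕ) ≤ 2 ^ n := Nat.one_le_two_pow
    push_cast [this]
    ring
  rw [hcast] at hmono
  have hpow : (2 : ℝ) ^ n * (1 / 2 : ℝ) ^ n = 1 := by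
    rw [← mul_pow]; norm_num
  have hpos : (0 : ℝ) < (1 / 2 : ℝ) ^ n := by positivity
  nlinarith [hlow, hmono]

lemma c4_solvable (r : Fin 2 → Bool) (p : (Fin 2 → Bool) → ℕ) (hp : 4 ≤ ∑ v, p v) :
    Solvable (cubeGraph 2) r p := by
  set a := Function.update r 0 (!(r 0)) with ha
  set b := Function.update r 1 (!(r 1)) with hb
  set c : Fin 2 → Bool := fun i => !(r i) with hc
  have hra : (cubeGraph 2).Adj r a := cube_adj.mpr (hammingDist_update r 0 _ (by simp))
  have hrb : (cubeGraph 2).Adj r b := cube_adj.mpr (hammingDist_update r 1 _ (by simp))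
  have hceqa : c = Function.update a 1 (!(a 1)) := by
    funext i
    fin_cases i <;> simp [ha, hc, Function.update_apply]
  have hceqb : c = Function.update b 0 (!(b 0)) := by
    funext i
    fin_cases i <;> simp [hb, hc, Function.update_apply]
  have hac : (cubeGraph 2).Adj a c := by
    rw [hceqa]; exact cube_adj.mpr (hammingDist_update a 1 _ (by simp))
  have hbc : (cubeGraph 2).Adj b c := by
    rw [hceqb]; exact cube_adj.mpr (hammingDist_update b 0 _ (by simp))
  have hcover : ∀ v : Fin 2 → Bool, v = r ∨ v = a ∨ v = b ∨ v = c := by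
    intro v
    by_cases h0 : v 0 = r 0 <;> by_cases h1 : v 1 = r 1
    · left; funext i; fin_cases i <;> assumption
    · right; right; left; funext i
      fin_cases i <;> simp [hb, Function.update_apply]
      · exact h0
      · revert h1; cases v 1 <;> cases r 1 <;> simp
    · right; left; funext i
      fin_cases i <;> simp [ha, Function.update_apply]
      · revert h0; cases v 0 <;> cases r 0 <;> simp
      · exact h1
    · right; right; right; funext i
      fin_cases i <;> simp [hc]
      · revert h0; cases v 0 <;> cases r 0 <;> simp
      · revert h1; cases v 1 <;> cases r 1 <;> simp
  have hsum : 4 ≤ p r + (p a + (p b + p c)) := by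
    have hpt : ∀ v, p v ≤ (if v = r then p r else 0) + ((if v = a then p a else 0)
        + ((if v = b then p b else 0) + (if v = c then p c else 0))) := by
      intro v
      rcases hcover v with h | h | h | h <;> simp [h] <;> split_ifs <;> omega
    have h1 : ∑ v, p v ≤ p r + (p a + (p b + p c)) := by
      calc ∑ v, p v ≤ ∑ v, ((if v = r then p r else 0) + ((if v = a then p a else 0)
          + ((if v = b then p b else 0) + (if v = c then p c else 0)))) :=
            Finset.sum_le_sum (fun v _ => hpt v)
        _ = p r + (p a + (p b + p c)) := by
            simp [Finset.sum_add_distrib, Finset.sum_ite_eq']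
    omega
  by_cases h0 : 1 ≤ p r
  · exact solv_root h0
  by_cases hA : 2 ≤ p a
  · exact solv_adj hra.symm hA
  by_cases hB : 2 ≤ p b
  · exact solv_adj hrb.symm hB
  by_cases hA1 : 1 ≤ p a
  · exact solv_chain2 hac.symm hra.symm (by omega) hA1
  by_cases hB1 : 1 ≤ p b
  · exact solv_chain2 hbc.symm hrb.symm (by omega) hB1
  · exact solv_chain4 hac.symm hra.symm (by omega)

lemma cube_solvable (m : ℕ) (r : Fin (m + 1) → Bool)
    (hvalid : ∀ a : Fin m → Bool, ValidWeight (addPendant (cubeGraph m) a) none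
      (fun v => 1 / ((addPendant (cubeGraph m) a).dist none v : ℝ)))
    (p : (Fin (m + 1) → Bool) → ℕ) (hp : 2 ^ (m + 1) ≤ ∑ v, p v) :
    Solvable (cubeGraph (m + 1)) r p := by
  classical
  by_contra hns
  have hpr : p r = 0 := by
    by_contra hh
    exact hns (solv_root (by omega))
  let e : Fin (m + 1) → Option (Fin m → Bool) → (Fin (m + 1) → Bool) := fun i o =>
    Option.elim o r (fun x => i.insertNth (!(r i)) x)
  have hecons : ∀ (i : Fin (m + 1)) x, e i (some x) = i.insertNth (!(r i)) x := fun _ _ => rfl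
  have henone : ∀ (i : Fin (m + 1)), e i none = r := fun _ => rfl
  have heinj : ∀ i, Function.Injective (e i) := by
    intro i o o' hh
    match o, o' with
    | none, none => rfl
    | none, some x =>
      exfalso
      have h2 := congrFun hh i
      rw [henone, hecons, Fin.insertNth_apply_same] at h2
      simp at h2
    | some x, none =>
      exfalso
      have h2 := congrFun hh i
      rw [henone, hecons, Fin.insertNth_apply_same] at h2
      simp at h2
    | some x, some y =>
      congr 1
      funext j
      have h2 := congrFun hh (i.succAbove j)
      rwa [hecons, hecons, Fin.insertNth_apply_succAbove, Fin.insertNth_apply_succAbove] at h2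
  have hdist : ∀ (i : Fin (m + 1)) (x : Fin m → Bool),
      hammingDist (i.insertNth (!(r i)) x : Fin (m + 1) → Bool) r
        = hammingDist (i.removeNth r) x + 1 := by
    intro i x
    have h1 := hammingDist_insertNth i (!(r i)) (r i) x (i.removeNth r)
    rw [Fin.insertNth_self_removeNth] at h1
    rw [h1, hammingDist_comm]
    simp [Nat.add_comm]
  have hadjmap : ∀ (i : Fin (m + 1)) (o o' : Option (Fin m → Bool)),
      (addPendant (cubeGraph m) (i.removeNth r)).Adj o o' →
      (cubeGraph (m + 1)).Adj (e i o) (e i o') := by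
    intro i o o' hadj
    rw [addPendant, fromRel_adj] at hadj
    obtain ⟨hne, hh⟩ := hadj
    have key : ∀ u v : Fin m → Bool, (cubeGraph m).Adj u v →
        (cubeGraph (m + 1)).Adj (e i (some u)) (e i (some v)) := by
      intro u v huv
      rw [cube_adj, hecons, hecons, hammingDist_insertNth]
      simp [cube_adj.mp huv]
    have key0 : (cubeGraph (m + 1)).Adj (e i none) (e i (some (i.removeNth r))) := by
      have h1 := hammingDist_insertNth i (r i) (!(r i)) (i.removeNth r) (i.removeNth r)
      rw [Fin.insertNth_self_removeNth] at h1
      rw [henone, hecons, cube_adj, h1]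
      simp [hammingDist_self]
    match o, o' with
    | none, none => exact absurd rfl hne
    | none, some u =>
      rcases hh with h | h
      · obtain rfl : u = i.removeNth r := h
        exact key0
      · exact h.elim
    | some u, none =>
      rcases hh with h | h
      · exact h.elim
      · obtain rfl : u = i.removeNth r := h
        exact key0.symm
    | some u, some v =>
      rcases hh with h | h
      · exact key u v h
      · exact (key v u h).symm
  have hstep : ∀ (i : Fin (m + 1)) (c d : Option (Fin m → Bool) → ℕ),
      PebMove (addPendant (cubeGraph m) (i.removeNth r)) c d →
      PebMove (cubeGraph (m + 1)) (Function.extend (e i) c fun _ => 0)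
        (Function.extend (e i) d fun _ => 0) := by
    rintro i c d ⟨u, v, hadj, h2, rfl⟩
    refine ⟨e i u, e i v, hadjmap i u v hadj, ?_, ?_⟩
    · rwa [(heinj i).extend_apply]
    · funext x
      rw [(heinj i).extend_apply, (heinj i).extend_apply]
      by_cases hx : ∃ o, e i o = x
      · obtain ⟨o, rfl⟩ := hx
        rw [(heinj i).extend_apply]
        by_cases ho : o = u
        · subst ho
          rw [if_pos rfl, if_pos (congrArg (e i) rfl)]
        · rw [if_neg (fun hh => ho (heinj i hh)), if_neg ho]
          by_cases ho2 : o = v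
          · subst ho2
            rw [if_pos rfl, if_pos (congrArg (e i) rfl)]
          · rw [if_neg (fun hh => ho2 (heinj i hh)), if_neg ho2, (heinj i).extend_apply]
      · have hxu : x ≠ e i u := fun hh => hx ⟨u, hh.symm⟩
        have hxv : x ≠ e i v := fun hh => hx ⟨v, hh.symm⟩
        rw [Function.extend_apply' _ _ _ hx, Function.extend_apply' _ _ _ hx,
          if_neg hxu, if_neg hxv]
  have hrtg : ∀ (i : Fin (m + 1)) (c d : Option (Fin m → Bool) → ℕ),
      Relation.ReflTransGen (PebMove (addPendant (cubeGraph m) (i.removeNth r))) c d →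
      Relation.ReflTransGen (PebMove (cubeGraph (m + 1)))
        (Function.extend (e i) c fun _ => 0) (Function.extend (e i) d fun _ => 0) := by
    intro i c d hcd
    induction hcd with
    | refl => exact Relation.ReflTransGen.refl
    | tail _ hstep' ih => exact ih.tail (hstep i _ _ hstep')
  have huns : ∀ i : Fin (m + 1),
      ¬ Solvable (addPendant (cubeGraph m) (i.removeNth r)) none (fun o => p (e i o)) := by
    rintro i ⟨q, hq, hq0⟩
    have hsolv : Solvable (cubeGraph (m + 1)) r
        (Function.extend (e i) (fun o => p (e i o)) fun _ => 0) := by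
      refine ⟨Function.extend (e i) q fun _ => 0, hrtg i _ _ hq, ?_⟩
      show 1 ≤ Function.extend (e i) q (fun _ => 0) r
      have hre : r = e i none := rfl
      rw [hre, (heinj i).extend_apply]
      exact hq0
    apply hns
    refine solvable_mono hsolv ?_
    intro v
    by_cases hv : ∃ o, e i o = v
    · obtain ⟨o, rfl⟩ := hv
      rw [(heinj i).extend_apply]
    · rw [Function.extend_apply' _ _ _ hv]
      exact Nat.zero_le _
  have hconf : ∀ (i : Fin (m + 1)) (c : (Fin (m + 1) → Bool) → ℕ),
      confWeight (fun o => 1 / (((addPendant (cubeGraph m) (i.removeNth r)).dist none o : ℝ)))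
        (fun o => c (e i o))
      = ∑ v, if v i = !(r i) then (c v : ℝ) * (1 / (hammingDist v r : ℝ)) else 0 := by
    intro i c
    unfold confWeight
    rw [Fintype.sum_option, ← Finset.sum_filter]
    have hnone : ((c (e i none) : ℝ))
        * (1 / (((addPendant (cubeGraph m) (i.removeNth r)).dist none none : ℝ))) = 0 := by
      rw [SimpleGraph.dist_self]
      norm_num
    rw [hnone, zero_add]
    refine Finset.sum_nbij' (fun x => (i.insertNth (!(r i)) x : Fin (m + 1) → Bool))
      (fun v => i.removeNth v) ?_ ?_ ?_ ?_ ?_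
    · intro x _
      simp [Fin.insertNth_apply_same]
    · intro v _
      exact Finset.mem_univ _
    · intro x _
      exact Fin.removeNth_insertNth (α := fun _ => Bool) i (!(r i)) x
    · intro v hv
      rw [Finset.mem_filter] at hv
      conv_rhs => rw [← Fin.insertNth_self_removeNth i v]
      rw [hv.2]
    · intro x _
      show (c (i.insertNth (!(r i)) x) : ℝ)
          * (1 / (((addPendant (cubeGraph m) (i.removeNth r)).dist none (some x)) : ℝ))
        = (c (i.insertNth (!(r i)) x) : ℝ)
          * (1 / ((hammingDist (i.insertNth (!(r i)) x : Fin (m + 1) → Bool) r : ℕ) : ℝ))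
      rw [pendant_dist, hdist i x]
  have hcount : ∀ (v : Fin (m + 1) → Bool) (t : ℝ),
      (∑ i, if v i = !(r i) then t else 0) = (hammingDist v r : ℝ) * t := by
    intro v t
    rw [← Finset.sum_filter, Finset.sum_const, nsmul_eq_mul]
    congr 2
    show (univ.filter fun i => v i = !(r i)).card = hammingDist v r
    unfold hammingDist
    congr 1
    exact Finset.filter_congr (fun i _ => Bool.eq_not_iff)
  have hkey : ∀ i : Fin (m + 1),
      (∑ v, if v i = !(r i) then (p v : ℝ) * (1 / (hammingDist v r : ℝ)) else 0)
        ≤ ∑ v, if v i = !(r i) then ((1 : ℕ) : ℝ) * (1 / (hammingDist v r : ℝ)) else 0 := by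
    intro i
    rw [← hconf i p, ← hconf i (fun _ => 1)]
    exact (hvalid (i.removeNth r)).2.2 _ (huns i)
  have htot := Finset.sum_le_sum (fun i (_ : i ∈ (univ : Finset (Fin (m + 1)))) => hkey i)
  have hL : ∑ i : Fin (m + 1), ∑ v,
      (if v i = !(r i) then (p v : ℝ) * (1 / (hammingDist v r : ℝ)) else 0)
      = ∑ v, (p v : ℝ) := by
    rw [Finset.sum_comm]
    refine Finset.sum_congr rfl (fun v _ => ?_)
    rw [hcount v _]
    by_cases hv : v = r
    · subst hv
      simp [hammingDist_self, hpr]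
    · have hdv : hammingDist v r ≠ 0 := fun hh => hv (hammingDist_eq_zero.mp hh)
      have hdv' : (hammingDist v r : ℝ) ≠ 0 := Nat.cast_ne_zero.mpr hdv
      field_simp
  have hR : ∑ i : Fin (m + 1), ∑ v,
      (if v i = !(r i) then ((1 : ℕ) : ℝ) * (1 / (hammingDist v r : ℝ)) else 0)
      = 2 ^ (m + 1) - 1 := by
    rw [Finset.sum_comm]
    have h1 : ∀ v : Fin (m + 1) → Bool,
        (∑ i, if v i = !(r i) then ((1 : ℕ) : ℝ) * (1 / (hammingDist v r : ℝ)) else 0)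
        = if v = r then 0 else 1 := by
      intro v
      rw [hcount]
      by_cases hv : v = r
      · subst hv
        simp [hammingDist_self]
      · have hdv : hammingDist v r ≠ 0 := fun hh => hv (hammingDist_eq_zero.mp hh)
        have hdv' : (hammingDist v r : ℝ) ≠ 0 := Nat.cast_ne_zero.mpr hdv
        rw [if_neg hv]
        field_simp
        norm_num
    rw [Finset.sum_congr rfl (fun v _ => h1 v)]
    have h2 : ∀ v : Fin (m + 1) → Bool,
        (if v = r then (0 : ℝ) else 1) = 1 - (if v = r then 1 else 0) := by
      intro v
      split_ifs <;> ring
    rw [Finset.sum_congr rfl (fun v _ => h2 v), Finset.sum_sub_distrib, Finset.sum_const,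
      Finset.sum_ite_eq' univ r (fun _ => (1 : ℝ)), nsmul_eq_mul]
    have hcard : (univ : Finset (Fin (m + 1) → Bool)).card = 2 ^ (m + 1) := by
      rw [Finset.card_univ, Fintype.card_fun]
      simp
    rw [hcard]
    push_cast
    simp
  rw [hL, hR] at htot
  have hsum : ((2 : ℝ) ^ (m + 1)) ≤ ∑ v, (p v : ℝ) := by
    have := hp
    have hcast : ((∑ v, p v : ℕ) : ℝ) = ∑ v, (p v : ℝ) := by push_cast; rfl
    calc ((2 : ℝ) ^ (m + 1)) = ((2 ^ (m + 1) : ℕ) : ℝ) := by push_cast; ring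
      _ ≤ ((∑ v, p v : ℕ) : ℝ) := by exact_mod_cast hp
      _ = _ := hcast
  linarith

theorem stmt15
    (h : ∀ m : ℕ, 2 ≤ m → ∀ a : Fin m → Bool,
      ValidWeight (addPendant (cubeGraph m) a) none
        (fun v => 1 / ((addPendant (cubeGraph m) a).dist none v : ℝ))) :
    ∀ n : ℕ, 2 ≤ n → pebblingNumber (cubeGraph n) = 2 ^ n := by
  intro n hn
  have hmem : ∀ (r : Fin n → Bool) (p : (Fin n → Bool) → ℕ), 2 ^ n ≤ ∑ v, p v →
      Solvable (cubeGraph n) r p := by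
    intro r p hp
    rcases Nat.lt_or_ge n 3 with h3 | h3
    · obtain rfl : n = 2 := by omega
      exact c4_solvable r p (by norm_num at hp; exact hp)
    · obtain ⟨m, rfl⟩ : ∃ m, n = m + 1 := ⟨n - 1, by omega⟩
      exact cube_solvable m r (fun a => h m (by omega) a) p hp
  have hne : Set.Nonempty {N : ℕ | ∀ (r : Fin n → Bool) (p : (Fin n → Bool) → ℕ),
      N ≤ ∑ v, p v → Solvable (cubeGraph n) r p} := ⟨2 ^ n, hmem⟩
  unfold pebblingNumber
  apply le_antisymm
  · exact Nat.sInf_le hmem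
  · by_contra hlt
    push_neg at hlt
    have hmem' := Nat.sInf_mem hne
    have hsum : ∑ v : Fin n → Bool, (if v = (fun _ => true) then 2 ^ n - 1 else 0)
        = 2 ^ n - 1 := by
      rw [Finset.sum_ite_eq' univ (fun _ => true) (fun _ => 2 ^ n - 1)]
      simp
    have h1 : (1 : ℕ) ≤ 2 ^ n := Nat.one_le_two_pow
    simp only [Set.mem_setOf_eq] at hmem'
    have hle : sInf {N : ℕ | ∀ (r : Fin n → Bool) (p : (Fin n → Bool) → ℕ),
        N ≤ ∑ v, p v → Solvable (cubeGraph n) r p}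
        ≤ ∑ v : Fin n → Bool, (if v = (fun _ => true) then 2 ^ n - 1 else 0) := by
      refine le_trans ?_ (le_of_eq hsum.symm)
      exact Nat.le_pred_of_lt hlt
    have hsolv := hmem' (fun _ => false)
      (fun v => if v = (fun _ => true) then 2 ^ n - 1 else 0) hle
    exact cube_unsolvable n hsolv
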